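/- Let a, b, m, t be integers satisfying a ≥ 1, (b − a)·m − a < a·t < (b − a)·m + a, and 1 − 2a ≤ b − a ≤ −1. Then |m + t| < |m| whenever |m| ≥ 2a, and |m + t| ≤ |m| whenever |m| < 2a. -/
import Mathlib


/-- Lemma 6.2: elementary inequality underlying the contraction estimate
for the Katsura self-similar action. -/
theorem abs_add_lt_of_interval (a b m t : ℤ)
    (ha : 1 ≤ a)
    (h1 : (b - a) * m - a < a * t)
    (h2 : a * t < (b - a) * m + a)
    (h3 : 1 - 2 * a ≤ b - a)
    (h4 : b - a ≤ -1) :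
    (2 * a ≤ |m| → |m + t| < |m|) ∧ (|m| < 2 * a → |m + t| ≤ |m|) := by
  have ha0 : (0:ℤ) < a := by linarith
  have hd : |a + (b - a)| ≤ a - 1 := by
    rw [abs_le]; constructor <;> linarith
  have hdiff : |a * (m + t) - (a + (b - a)) * m| ≤ a - 1 := by
    rw [abs_le]; constructor <;> nlinarith
  have hdm : |(a + (b - a)) * m| ≤ (a - 1) * |m| := by
    rw [abs_mul]
    exact mul_le_mul_of_nonneg_right hd (abs_nonneg m)
  have key : a * |m + t| ≤ (a - 1) * |m| + (a - 1) := by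
    have h5 : |a * (m + t)| ≤ |(a + (b - a)) * m| + |a * (m + t) - (a + (b - a)) * m| := by
      calc |a * (m + t)| = |(a + (b - a)) * m + (a * (m + t) - (a + (b - a)) * m)| := by ring_nf
        _ ≤ _ := abs_add_le _ _
    rw [abs_mul, abs_of_pos ha0] at h5
    linarith
  have hmt := abs_nonneg (m + t)
  constructor
  · intro h
    have : a * |m + t| < a * |m| := by nlinarith
    exact lt_of_mul_lt_mul_left this (le_of_lt ha0)
  · intro h
    have : a * |m + t| < a * (|m| + 1) := by nlinarith [abs_nonneg m]
    have := lt_of_mul_lt_mul_left this (le_of_lt ha0)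
    omega
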